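/- Let I ≥ 1 and D : Fin I → ℝ, and suppose b ∈ ℝ satisfies ∑_i max(0, −b − D_i) = 2. Define λ : Fin I → ℝ by λ_i = max(0, (−b − D_i)/2). Then: (1) λ_i ≥ 0 for all i and ∑_i λ_i = 1, i.e., λ lies in the probability simplex Δ; and (2) for every μ : Fin I → ℝ with μ_i ≥ 0 for all i and ∑_i μ_i = 1, one has ∑_i λ_i D_i + ∑_i λ_i² ≤ ∑_i μ_i D_i + ∑_i μ_i². -/
import Mathlib


/-- Optimality of the KKT soft-threshold solution of the weight-update subproblem:
if `∑ i, max 0 (-b - D i) = 2` then `λ i = max 0 ((-b - D i)/2)` lies in the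
probability simplex and minimizes `∑ i, λ i * D i + ∑ i, (λ i)²` over it. -/
theorem kkt_solution_optimal
    (I : ℕ) (hI : 1 ≤ I) (D : Fin I → ℝ)
    (b : ℝ) (hb : ∑ i, max 0 (-b - D i) = 2)
    (lam : Fin I → ℝ) (hlam : ∀ i, lam i = max 0 ((-b - D i) / 2)) :
    ((∀ i, 0 ≤ lam i) ∧ ∑ i, lam i = 1) ∧
      ∀ μ : Fin I → ℝ, (∀ i, 0 ≤ μ i) → ∑ i, μ i = 1 →
        ∑ i, lam i * D i + ∑ i, (lam i) ^ 2 ≤ ∑ i, μ i * D i + ∑ i, (μ i) ^ 2 := by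
  have hnn : ∀ i, 0 ≤ lam i := fun i => (hlam i) ▸ le_max_left 0 _
  have hsum : ∑ i, lam i = 1 := by
    have : ∑ i, lam i = (∑ i, max 0 (-b - D i)) / 2 := by
      rw [Finset.sum_div]
      exact Finset.sum_congr rfl fun i _ => by
        rw [hlam i]
        rcases le_total (-b - D i) 0 with h | h
        · rw [max_eq_left (by linarith), max_eq_left h]; linarith
        · rw [max_eq_right (by linarith), max_eq_right h]
    rw [this, hb]; norm_num
  refine ⟨⟨hnn, hsum⟩, fun μ hμnn hμsum => ?_⟩
  -- pointwise: lam i * D i + lam i ^2 + (-b) * (μ i - lam i) ≤ μ i * D i + μ i ^ 2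
  have key : ∀ i : Fin I, lam i * D i + lam i ^ 2 + (-b) * (μ i - lam i)
      ≤ μ i * D i + μ i ^ 2 := by
    intro i
    have hsq : lam i ^ 2 + 2 * lam i * (μ i - lam i) ≤ μ i ^ 2 := by nlinarith [sq_nonneg (μ i - lam i)]
    have : (-b) * (μ i - lam i) ≤ (D i + 2 * lam i) * (μ i - lam i) := by
      rcases le_total (-b - D i) 0 with h | h
      · have h0 : lam i = 0 := by rw [hlam i, max_eq_left (by linarith)]
        have : 0 ≤ μ i - lam i := by rw [h0]; simpa using hμnn i
        nlinarith
      · have h0 : lam i = (-b - D i) / 2 := by rw [hlam i, max_eq_right (by linarith)]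
        have : D i + 2 * lam i = -b := by rw [h0]; ring
        rw [this]
    nlinarith
  have hsums := Finset.sum_le_sum (fun i (_ : i ∈ Finset.univ) => key i)
  simp only [Finset.sum_add_distrib, ← Finset.mul_sum,
    Finset.sum_sub_distrib] at hsums
  rw [hsum, hμsum] at hsums
  linarith
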